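/- Vanishing of the Gross-Pitaevskii violation integral for the first angular momentum moment (Eq. (32) of the paper): let σ₀ > 0, x₀, y₀, p₀ ∈ ℝ and define φ : ℝ² → ℂ by φ(x,y) = (π σ₀²)^{−1/2} exp(−((x−x₀)² + (y−y₀)²)/(2σ₀²)) · exp(i p₀ x). Then Im ∫_{ℝ²} conj(φ(x,y)) · |φ(x,y)|² · (−i)·(x·∂φ/∂y (x,y) − y·∂φ/∂x (x,y)) dx dy = 0. By the mean-field moment-derivative formula d/dt⟨aⁿ⟩ = −2λ Im⟨φ| |φ|² aⁿ |φ⟩, this expresses that d/dt ⟨L_z⟩_GP = 0 at this state. -/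

import Mathlib

open Real Complex MeasureTheory

private lemma im_aux (w : ℂ) (n a b x y p : ℝ) :
    ((starRingEnd ℂ) w * (n:ℂ)
      * (-Complex.I * ((x:ℂ) * (w * (a:ℂ)) - (y:ℂ) * (w * ((b:ℂ) + Complex.I * p))))).im
    = n * Complex.normSq w * (y*b - x*a) := by
  simp [Complex.ext_iff, Complex.normSq_apply, Complex.mul_im, Complex.mul_re]
  ring

/-- **Vanishing of the Gross-Pitaevskii violation integral for the first angular
momentum moment (Eq. (32)).** For the boosted displaced Gaussian orbital,
`Im ⟪φ, |φ|² l_z φ⟫ = 0`, expressing `d/dt ⟨L_z⟩_GP = 0`. -/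
theorem gp_first_lz_moment_violation_integral_vanishes
    (σ₀ x₀ y₀ p₀ : ℝ) (hσ : 0 < σ₀) (φ : ℝ → ℝ → ℂ)
    (hφ : ∀ x y : ℝ, φ x y =
      (((π * σ₀ ^ 2) ^ (-(1 / 2 : ℝ)) : ℝ) : ℂ)
        * Complex.exp (-(((x - x₀ : ℝ) : ℂ) ^ 2 + ((y - y₀ : ℝ) : ℂ) ^ 2)
            / (2 * (σ₀ : ℂ) ^ 2))
        * Complex.exp (Complex.I * (p₀ : ℂ) * (x : ℂ))) :
    (∫ z : ℝ × ℝ, (starRingEnd ℂ) (φ z.1 z.2) * (‖φ z.1 z.2‖ ^ 2 : ℂ)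
        * (-Complex.I * ((z.1 : ℂ) * deriv (fun y : ℝ => φ z.1 y) z.2
            - (z.2 : ℂ) * deriv (fun x : ℝ => φ x z.2) z.1))).im = 0 := by
  have hσ2 : (σ₀:ℂ)^2 ≠ 0 := by
    exact_mod_cast pow_ne_zero 2 (Complex.ofReal_ne_zero.mpr hσ.ne')
  set C : ℂ := (((π * σ₀ ^ 2) ^ (-(1 / 2 : ℝ)) : ℝ) : ℂ) with hC
  -- rewritten form with casts pushed
  have hφ' : ∀ x y : ℝ, φ x y =
      C * Complex.exp (-(((x:ℂ) - x₀) ^ 2 + ((y:ℂ) - y₀) ^ 2) / (2 * (σ₀ : ℂ) ^ 2))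
        * Complex.exp (Complex.I * (p₀ : ℂ) * (x : ℂ)) := by
    intro x y; rw [hφ]; push_cast; ring_nf
  -- derivative of ofReal
  have hid : ∀ t : ℝ, HasDerivAt (fun t : ℝ => ((t:ℝ):ℂ)) 1 t := by
    intro t; simpa using (hasDerivAt_id t).ofReal_comp
  -- derivative in y
  have hdy : ∀ x y : ℝ, HasDerivAt (fun y : ℝ => φ x y)
      (φ x y * ((-((y:ℂ) - y₀) / (σ₀:ℂ)^2))) y := by
    intro x y
    have hfun : (fun y : ℝ => φ x y)
        = fun y : ℝ => C * Complex.exp (-(((x:ℂ) - x₀) ^ 2 + ((y:ℂ) - y₀) ^ 2)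
            / (2 * (σ₀ : ℂ) ^ 2)) * Complex.exp (Complex.I * (p₀ : ℂ) * (x : ℂ)) :=
      funext (hφ' x)
    rw [hfun, hφ' x y]
    have h3 : HasDerivAt (fun y : ℝ => ((y:ℂ) - y₀)^2) (2*((y:ℂ)-y₀)) y := by
      have h := (hid y).sub_const (y₀:ℂ)
      have h2 := h.mul h
      have hf2 : (fun y : ℝ => ((y:ℂ) - y₀)^2) = fun y : ℝ => ((y:ℂ)-y₀) * ((y:ℂ)-y₀) := by
        funext t; ring
      rw [hf2]
      exact h2.congr_deriv (by ring)
    have h4 : HasDerivAt (fun y : ℝ =>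
        -(((x:ℂ) - x₀)^2 + ((y:ℂ) - y₀)^2) / (2*(σ₀:ℂ)^2))
        (-(2*((y:ℂ)-y₀))/(2*(σ₀:ℂ)^2)) y := ((h3.const_add _).neg).div_const _
    have h5 := ((h4.cexp.const_mul C).mul_const
      (Complex.exp (Complex.I * (p₀ : ℂ) * (x : ℂ))))
    convert h5 using 1
    · rfl
    ring
  -- derivative in x
  have hdx : ∀ x y : ℝ, HasDerivAt (fun x : ℝ => φ x y)
      (φ x y * ((-((x:ℂ) - x₀) / (σ₀:ℂ)^2) + Complex.I * p₀)) x := by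
    intro x y
    have hfun : (fun x : ℝ => φ x y)
        = fun x : ℝ => C * Complex.exp (-(((x:ℂ) - x₀) ^ 2 + ((y:ℂ) - y₀) ^ 2)
            / (2 * (σ₀ : ℂ) ^ 2)) * Complex.exp (Complex.I * (p₀ : ℂ) * (x : ℂ)) :=
      funext (fun x => hφ' x y)
    rw [hfun, hφ' x y]
    have h3 : HasDerivAt (fun x : ℝ => ((x:ℂ) - x₀)^2) (2*((x:ℂ)-x₀)) x := by
      have h := (hid x).sub_const (x₀:ℂ)
      have h2 := h.mul h
      have hf2 : (fun x : ℝ => ((x:ℂ) - x₀)^2) = fun x : ℝ => ((x:ℂ)-x₀) * ((x:ℂ)-x₀) := by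
        funext t; ring
      rw [hf2]
      exact h2.congr_deriv (by ring)
    have h4 : HasDerivAt (fun x : ℝ =>
        -(((x:ℂ) - x₀)^2 + ((y:ℂ) - y₀)^2) / (2*(σ₀:ℂ)^2))
        (-(2*((x:ℂ)-x₀))/(2*(σ₀:ℂ)^2)) x := (((h3.add_const _).neg).div_const _)
    have h6 : HasDerivAt (fun x : ℝ => Complex.exp (Complex.I * (p₀ : ℂ) * (x : ℂ)))
        (Complex.exp (Complex.I * (p₀ : ℂ) * (x : ℂ)) * (Complex.I * p₀)) x := by
      simpa [mul_comm] using ((hid x).const_mul (Complex.I * (p₀:ℂ))).cexp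
    have h5 := (h4.cexp.const_mul C).mul h6
    convert h5 using 1
    · rfl
    · rfl
    ring
  -- norm of φ
  have hnorm : ∀ x y : ℝ, ‖φ x y‖
      = ‖C‖ * Real.exp (-((x - x₀)^2 + (y - y₀)^2) / (2*σ₀^2)) := by
    intro x y
    rw [hφ' x y]
    have harg : -(((x:ℂ) - x₀) ^ 2 + ((y:ℂ) - y₀) ^ 2) / (2 * (σ₀ : ℂ) ^ 2)
        = ((-((x - x₀)^2 + (y - y₀)^2) / (2*σ₀^2) : ℝ) : ℂ) := by
      push_cast; ring
    rw [norm_mul, norm_mul, harg]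
    have h1 : ‖Complex.exp (((-((x - x₀)^2 + (y - y₀)^2) / (2*σ₀^2) : ℝ)):ℂ)‖
        = Real.exp (-((x - x₀)^2 + (y - y₀)^2) / (2*σ₀^2)) := by
      rw [Complex.norm_exp, Complex.ofReal_re]
    have h2 : ‖Complex.exp (Complex.I * (p₀:ℂ) * (x:ℂ))‖ = 1 := by
      rw [Complex.norm_exp]
      simp [Complex.mul_re]
    rw [h1, h2, mul_one]
  -- the integrand and its imaginary part
  set f : ℝ × ℝ → ℂ := fun z => (starRingEnd ℂ) (φ z.1 z.2) * (‖φ z.1 z.2‖ ^ 2 : ℂ)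
        * (-Complex.I * ((z.1 : ℂ) * deriv (fun y : ℝ => φ z.1 y) z.2
            - (z.2 : ℂ) * deriv (fun x : ℝ => φ x z.2) z.1)) with hfdef
  have him : ∀ z : ℝ × ℝ, (f z).im
      = ‖φ z.1 z.2‖^2 * Complex.normSq (φ z.1 z.2)
          * (z.2 * (-(z.1 - x₀)/σ₀^2) - z.1 * (-(z.2 - y₀)/σ₀^2)) := by
    rintro ⟨x, y⟩
    have e1 : deriv (fun y : ℝ => φ x y) y = φ x y * ((-((y:ℂ) - y₀) / (σ₀:ℂ)^2)) :=
      (hdy x y).deriv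
    have e2 : deriv (fun x : ℝ => φ x y) x
        = φ x y * ((-((x:ℂ) - x₀) / (σ₀:ℂ)^2) + Complex.I * p₀) :=
      (hdx x y).deriv
    have c1 : ((-((y:ℂ) - y₀) / (σ₀:ℂ)^2)) = (((-(y - y₀)/σ₀^2 : ℝ)) : ℂ) := by
      push_cast; ring
    have c2 : ((-((x:ℂ) - x₀) / (σ₀:ℂ)^2) + Complex.I * p₀)
        = ((((-(x - x₀)/σ₀^2 : ℝ)) : ℂ) + Complex.I * p₀) := by
      push_cast; ring
    simp only [hfdef, e1, e2, c1, c2]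
    have := im_aux (φ x y) (‖φ x y‖^2) (-(y - y₀)/σ₀^2) (-(x - x₀)/σ₀^2) x y p₀
    simpa using this
  by_cases hf : Integrable f volume
  · have him' : (∫ z : ℝ × ℝ, (f z).im) = (∫ z : ℝ × ℝ, f z).im := integral_im hf
    rw [← him']
    -- now show ∫ (f z).im = 0 by reflection symmetry
    have hrefl := integral_sub_left_eq_self (fun z : ℝ × ℝ => (f z).im) volume
      ((2*x₀, 2*y₀) : ℝ × ℝ)
    have hkey : ∀ z : ℝ × ℝ, (f (((2*x₀, 2*y₀) : ℝ × ℝ) - z)).im = - (f z).im := by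
      rintro ⟨x, y⟩
      have hn : ‖φ (2*x₀ - x) (2*y₀ - y)‖ = ‖φ x y‖ := by
        rw [hnorm, hnorm]
        ring_nf
      have hns : Complex.normSq (φ (2*x₀ - x) (2*y₀ - y)) = Complex.normSq (φ x y) := by
        rw [← Complex.sq_norm, ← Complex.sq_norm, hn]
      have hthis := him ((2*x₀ - x, 2*y₀ - y) : ℝ × ℝ)
      rw [Prod.mk_sub_mk, hthis, him (x, y), hn, hns]
      ring
    simp_rw [hkey] at hrefl
    rw [integral_neg] at hrefl
    linarith
  · rw [integral_undef hf]
    simp
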